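/- Let G be a strict episode with machine M = M(G). A sequence S over Σ covers the sink state of M(G) (i.e., some subsequence T of S satisfies g(M, T) = G) if and only if the whole sequence leads greedily to the sink state: g(M, S) = G. -/

import Mathlib

open scoped Classical

/-- An episode: a finite DAG with labelled vertices. -/
structure Episode (V A : Type*) where
  verts : Finset V
  edges : Finset (V × V)
  lab : V → A
  edges_sub : ∀ e ∈ edges, e.1 ∈ verts ∧ e.2 ∈ verts
  acyclic : ∀ v, ¬ Relation.TransGen (fun a b => (a, b) ∈ edges) v v

namespace Episode

variable {V A : Type*} [DecidableEq V]

/-- A strict episode: any two distinct vertices sharing a label are connected. -/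
def Strict (G : Episode V A) : Prop :=
  ∀ v ∈ G.verts, ∀ w ∈ G.verts, v ≠ w → G.lab v = G.lab w →
    (v, w) ∈ G.edges ∨ (w, v) ∈ G.edges

/-- `W` induces a prefix subgraph of `G`: it is closed under taking ancestors. -/
def IsPrefix (G : Episode V A) (W : Finset V) : Prop :=
  W ⊆ G.verts ∧ ∀ v ∈ W, ∀ w, (w, v) ∈ G.edges → w ∈ W

/-- Labelled edge of the machine `M(G)`: `(H, F)` is an edge with label `l` when `H` is
obtained from `F` by deleting a single sink vertex of `F` labelled `l`
(states are identified with their vertex sets, as prefix subgraphs are induced). -/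
def MachEdge (G : Episode V A) (H F : Finset V) (l : A) : Prop :=
  G.IsPrefix H ∧ G.IsPrefix F ∧
    ∃ x, x ∉ H ∧ F = insert x H ∧ G.lab x = l ∧ ∀ w ∈ F, (x, w) ∉ G.edges

/-- The set of (unlabelled) edges of the machine `M(G)`. -/
def MachineEdges (G : Episode V A) : Set (Finset V × Finset V) :=
  {e | ∃ l, G.MachEdge e.1 e.2 l}

/-- A sequence `S` covers an episode `G`. -/
def Covers (G : Episode V A) (S : List A) : Prop :=
  ∃ m : V → ℕ, Set.InjOn m ↑G.verts ∧
    (∀ v ∈ G.verts, S[m v]? = some (G.lab v)) ∧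
    ∀ e ∈ G.edges, m e.1 < m e.2

/-- The induced episode `G(W)`. -/
def induce (G : Episode V A) (W : Finset V) : Episode V A where
  verts := G.verts ∩ W
  edges := G.edges.filter fun e => e.1 ∈ W ∧ e.2 ∈ W
  lab := G.lab
  edges_sub := by
    intro e he
    rw [Finset.mem_filter] at he
    have h1 := G.edges_sub e he.1
    exact ⟨Finset.mem_inter.mpr ⟨h1.1, he.2.1⟩, Finset.mem_inter.mpr ⟨h1.2, he.2.2⟩⟩
  acyclic := by
    intro v hv
    exact G.acyclic v
      (Relation.TransGen.mono (fun a b hab => (Finset.mem_filter.mp hab).1) _ _ hv)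

/-- One greedy step of the machine `M(G)` from state `H` reading the symbol `s`:
follow the outgoing edge labelled `s` if there is one, otherwise stay. -/
noncomputable def greedyStep (G : Episode V A) (H : Finset V) (s : A) : Finset V :=
  if h : ∃ F, G.MachEdge H F s then h.choose else H

/-- The greedy state `g(M(G), S, H)`. -/
noncomputable def greedy (G : Episode V A) : Finset V → List A → Finset V
  | H, [] => H
  | H, s :: S => greedy G (G.greedyStep H s) S

/-- The edge set `block(W | G)` of the machine `M(G)`. -/
def Block (G : Episode V A) (W : Finset V) : Set (Finset V × Finset V) :=
  {e | (∃ l, G.MachEdge e.1 e.2 l) ∧ (e.1 ∩ W).Nonempty ∧ e.2 \ e.1 ⊆ W}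

/-- The states of the machine `M(G)`: all prefix subgraphs of `G`. -/
noncomputable def states (G : Episode V A) : Finset (Finset V) :=
  G.verts.powerset.filter fun X => G.IsPrefix X

/-- The number of positions `i` of `S` at which the machine is (greedily) in state `H`
and the symbol read is `l`. -/
noncomputable def countHL (G : Episode V A) (S : List A) (H : Finset V) (l : A) : ℕ :=
  ((Finset.range S.length).filter fun i => G.greedy ∅ (S.take i) = H ∧ S[i]? = some l).card

section Prob

variable [Fintype A]

/-- `pInd G p H n`: probability that `n` i.i.d. symbols with distribution `p`
lead the machine greedily from the source state to `H`. -/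
noncomputable def pInd (G : Episode V A) (p : A → ℝ) (H : Finset V) (n : ℕ) : ℝ :=
  ∑ f : Fin n → A, if G.greedy ∅ (List.ofFn f) = H then ∏ i, p (f i) else 0

/-- Unnormalized weight of label `l` at state `H` in the partition model. -/
noncomputable def pweight (G : Episode V A) (C₁ C₂ : Set (Finset V × Finset V))
    (u : A → ℝ) (t₁ t₂ : ℝ) (H : Finset V) (l : A) : ℝ :=
  if ∃ F, (H, F) ∈ C₁ ∧ G.MachEdge H F l then Real.exp (u l + t₁)
  else if ∃ F, (H, F) ∈ C₂ ∧ G.MachEdge H F l then Real.exp (u l + t₂)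
  else Real.exp (u l)

/-- Conditional probability `p(l | H)` of the partition model. -/
noncomputable def condP (G : Episode V A) (C₁ C₂ : Set (Finset V × Finset V))
    (u : A → ℝ) (t₁ t₂ : ℝ) (H : Finset V) (l : A) : ℝ :=
  G.pweight C₁ C₂ u t₁ t₂ H l / ∑ l' : A, G.pweight C₁ C₂ u t₁ t₂ H l'

/-- Probability of a sequence under the partition model, started from state `H`. -/
noncomputable def seqP (G : Episode V A) (C₁ C₂ : Set (Finset V × Finset V))
    (u : A → ℝ) (t₁ t₂ : ℝ) : Finset V → List A → ℝ
  | _, [] => 1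
  | H, s :: S => G.condP C₁ C₂ u t₁ t₂ H s * seqP G C₁ C₂ u t₁ t₂ (G.greedyStep H s) S

/-- `pPart G C₁ C₂ u t₁ t₂ H n`: probability under the partition model that a random
sequence of length `n` leads the machine greedily from the source state to `H`. -/
noncomputable def pPart (G : Episode V A) (C₁ C₂ : Set (Finset V × Finset V))
    (u : A → ℝ) (t₁ t₂ : ℝ) (H : Finset V) (n : ℕ) : ℝ :=
  ∑ f : Fin n → A,
    if G.greedy ∅ (List.ofFn f) = H then G.seqP C₁ C₂ u t₁ t₂ ∅ (List.ofFn f) else 0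

end Prob

/-- The transitive closure of an episode. -/
noncomputable def closure (G : Episode V A) : Episode V A where
  verts := G.verts
  edges := (G.verts ×ˢ G.verts).filter fun e =>
    Relation.TransGen (fun a b => (a, b) ∈ G.edges) e.1 e.2
  lab := G.lab
  edges_sub := by
    intro e he
    rw [Finset.mem_filter] at he
    exact Finset.mem_product.mp he.1
  acyclic := by
    intro v hv
    apply G.acyclic v
    rw [← Relation.transGen_idem (r := fun a b => (a, b) ∈ G.edges)]
    refine Relation.TransGen.mono ?_ _ _ hv
    intro a b hab
    exact (Finset.mem_filter.mp hab).2

end Episode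

namespace Episode

variable {V A : Type*} [DecidableEq V]

lemma subset_greedyStep (G : Episode V A) (H : Finset V) (s : A) :
    H ⊆ G.greedyStep H s := by
  unfold greedyStep
  split
  · next h =>
    obtain ⟨_, _, ⟨x, hx, hF, _, _⟩⟩ := h.choose_spec
    rw [hF]; exact Finset.subset_insert _ _
  · exact subset_rfl

lemma greedyStep_isPrefix (G : Episode V A) {H : Finset V} (hH : G.IsPrefix H) (s : A) :
    G.IsPrefix (G.greedyStep H s) := by
  unfold greedyStep
  split
  · next h => exact h.choose_spec.2.1
  · exact hH

lemma machEdge_unique (G : Episode V A) (hG : G.Strict) {H F₁ F₂ : Finset V} {s : A}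
    (h1 : G.MachEdge H F₁ s) (h2 : G.MachEdge H F₂ s) : F₁ = F₂ := by
  obtain ⟨hHp, hF1p, x₁, hx₁, hF1, hl₁, hs₁⟩ := h1
  obtain ⟨-, hF2p, x₂, hx₂, hF2, hl₂, hs₂⟩ := h2
  rcases eq_or_ne x₁ x₂ with rfl | hne
  · rw [hF1, hF2]
  · have hx₁v : x₁ ∈ G.verts := hF1p.1 (hF1 ▸ Finset.mem_insert_self _ _)
    have hx₂v : x₂ ∈ G.verts := hF2p.1 (hF2 ▸ Finset.mem_insert_self _ _)
    rcases hG x₁ hx₁v x₂ hx₂v hne (hl₁.trans hl₂.symm) with he | he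
    · have := hF2p.2 x₂ (hF2 ▸ Finset.mem_insert_self _ _) x₁ he
      rw [hF2, Finset.mem_insert] at this
      rcases this with h | h
      · exact absurd h hne
      · exact absurd h hx₁
    · have := hF1p.2 x₁ (hF1 ▸ Finset.mem_insert_self _ _) x₂ he
      rw [hF1, Finset.mem_insert] at this
      rcases this with h | h
      · exact absurd h.symm hne
      · exact absurd h hx₂

lemma greedyStep_mono (G : Episode V A) (hG : G.Strict) {H₁ H₂ : Finset V}
    (h1 : G.IsPrefix H₁) (h2 : G.IsPrefix H₂) (hsub : H₁ ⊆ H₂) (s : A) :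
    G.greedyStep H₁ s ⊆ G.greedyStep H₂ s := by
  have hH2step : H₂ ⊆ G.greedyStep H₂ s := G.subset_greedyStep H₂ s
  by_cases he : ∃ F, G.MachEdge H₁ F s
  · have hstep1 : G.greedyStep H₁ s = he.choose := dif_pos he
    obtain ⟨-, hFp, x, hx, hF, hl, hsink⟩ := he.choose_spec
    rw [hstep1, hF]
    by_cases hx2 : x ∈ H₂
    · intro v hv
      rw [Finset.mem_insert] at hv
      rcases hv with rfl | hv
      · exact hH2step hx2
      · exact hH2step (hsub hv)
    · -- build machine edge from H₂
      have hnoself : (x, x) ∉ G.edges := fun h =>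
        G.acyclic x (Relation.TransGen.single h)
      have hedge2 : G.MachEdge H₂ (insert x H₂) s := by
        refine ⟨h2, ⟨?_, ?_⟩, x, hx2, rfl, hl, ?_⟩
        · intro v hv
          rw [Finset.mem_insert] at hv
          rcases hv with rfl | hv
          · exact hFp.1 (hF ▸ Finset.mem_insert_self _ _)
          · exact h2.1 hv
        · intro v hv w hw
          rw [Finset.mem_insert] at hv
          rcases hv with rfl | hv
          · have hwF := hFp.2 v (hF ▸ Finset.mem_insert_self _ _) w hw
            rw [hF, Finset.mem_insert] at hwF
            rcases hwF with rfl | hwF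
            · exact absurd hw hnoself
            · exact Finset.mem_insert_of_mem (hsub hwF)
          · exact Finset.mem_insert_of_mem (h2.2 v hv w hw)
        · intro w hw hxw
          rw [Finset.mem_insert] at hw
          rcases hw with rfl | hw
          · exact hnoself hxw
          · exact hx2 (h2.2 w hw x hxw)
      have he2 : ∃ F, G.MachEdge H₂ F s := ⟨_, hedge2⟩
      have hstep2 : G.greedyStep H₂ s = he2.choose := dif_pos he2
      have : he2.choose = insert x H₂ := G.machEdge_unique hG he2.choose_spec hedge2
      rw [hstep2, this]
      exact Finset.insert_subset_insert _ hsub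
  · rw [greedyStep, dif_neg he]
    exact hsub.trans hH2step

lemma greedy_isPrefix (G : Episode V A) :
    ∀ (S : List A) {H : Finset V}, G.IsPrefix H → G.IsPrefix (G.greedy H S)
  | [], _, hH => hH
  | s :: S, H, hH => G.greedy_isPrefix S (G.greedyStep_isPrefix hH s)

lemma greedy_mono (G : Episode V A) (hG : G.Strict) :
    ∀ {T S : List A}, T.Sublist S → ∀ {H₁ H₂ : Finset V},
      G.IsPrefix H₁ → G.IsPrefix H₂ → H₁ ⊆ H₂ → G.greedy H₁ T ⊆ G.greedy H₂ S := by
  intro T S hTS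
  induction hTS with
  | slnil =>
    intro H₁ H₂ _ _ hsub
    exact hsub
  | cons a hTS ih =>
    intro H₁ H₂ h1 h2 hsub
    exact ih h1 (G.greedyStep_isPrefix h2 a)
      (hsub.trans (G.subset_greedyStep H₂ a))
  | cons_cons a hTS ih =>
    intro H₁ H₂ h1 h2 hsub
    exact ih (G.greedyStep_isPrefix h1 a) (G.greedyStep_isPrefix h2 a)
      (G.greedyStep_mono hG h1 h2 hsub a)

lemma empty_isPrefix (G : Episode V A) : G.IsPrefix ∅ :=
  ⟨Finset.empty_subset _, fun v hv => absurd hv (Finset.notMem_empty v)⟩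

end Episode

/-- A sequence covers the sink state of the machine of a strict episode
(i.e. some subsequence leads greedily to the sink) iff the whole sequence leads
greedily to the sink state. -/
theorem Episode.covers_sink_iff_greedy {V A : Type*} [DecidableEq V]
    (G : Episode V A) (hG : G.Strict) (S : List A) :
    (∃ T : List A, T.Sublist S ∧ G.greedy ∅ T = G.verts) ↔ G.greedy ∅ S = G.verts := by
  constructor
  · rintro ⟨T, hTS, hT⟩
    have hmono := G.greedy_mono hG hTS G.empty_isPrefix G.empty_isPrefix subset_rfl
    rw [hT] at hmono
    exact Finset.Subset.antisymm (G.greedy_isPrefix S G.empty_isPrefix).1 hmono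
  · intro h
    exact ⟨S, List.Sublist.refl S, h⟩
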